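/- Let f be a formal power series over ℝ with zero constant term, all coefficients nonnegative, and first coefficient a₁ > 0, and let g = exp(f). Then for every n ≥ 1 the coefficients b_n of g satisfy n·b_n ≥ a₁·b_{n-1} and b_n > 0. Consequently the associated sequence x_n := b_{n-1}/b_n satisfies 0 ≤ x_n ≤ n·x_1 for all n ≥ 1, where x_1 = b_0/b_1 = 1/a₁. -/

import Mathlib

open PowerSeries

private lemma key_rec (f g : PowerSeries ℝ)
    (hgexp : PowerSeries.derivative ℝ g = PowerSeries.derivative ℝ f * g) (n : ℕ) :
    ((n : ℝ) + 1) * PowerSeries.coeff (n + 1) g =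
      ∑ p ∈ Finset.HasAntidiagonal.antidiagonal n,
        PowerSeries.coeff (p.1 + 1) f * ((p.1 : ℝ) + 1) * PowerSeries.coeff p.2 g := by
  have h := congrArg (PowerSeries.coeff n) hgexp
  rw [PowerSeries.coeff_derivative, PowerSeries.coeff_mul] at h
  rw [mul_comm, h]
  apply Finset.sum_congr rfl
  intro p _
  rw [PowerSeries.coeff_derivative]

/-- Let `f` be a formal power series over `ℝ` with zero constant term,
nonnegative coefficients and first coefficient `a₁ > 0`, and let
`g = exp f`, characterized by `g' = f' · g` and constant term `1`.
Then for every `n ≥ 1` the coefficients `b_n` of `g` satisfy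
`a₁ b_{n-1} ≤ n b_n` and `b_n > 0`; consequently the CST sequence
`x_n = b_{n-1}/b_n` satisfies `0 ≤ x_n ≤ n x_1` with `x_1 = b_0/b_1 = 1/a₁`. -/
theorem cst_sequence_bounds (f g : PowerSeries ℝ)
    (hf0 : PowerSeries.constantCoeff f = 0)
    (hfnonneg : ∀ k, 0 ≤ PowerSeries.coeff k f)
    (hf1 : 0 < PowerSeries.coeff 1 f)
    (hg0 : PowerSeries.constantCoeff g = 1)
    (hgexp : PowerSeries.derivative ℝ g = PowerSeries.derivative ℝ f * g) :
    ∀ n : ℕ, 1 ≤ n →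
      PowerSeries.coeff 1 f * PowerSeries.coeff (n - 1) g ≤
        (n : ℝ) * PowerSeries.coeff n g ∧
      0 < PowerSeries.coeff n g ∧
      0 ≤ PowerSeries.coeff (n - 1) g / PowerSeries.coeff n g ∧
      PowerSeries.coeff (n - 1) g / PowerSeries.coeff n g ≤
        (n : ℝ) * (PowerSeries.coeff 0 g / PowerSeries.coeff 1 g) ∧
      PowerSeries.coeff 0 g / PowerSeries.coeff 1 g =
        1 / PowerSeries.coeff 1 f := by
  have hb0 : PowerSeries.coeff 0 g = 1 := by
    rw [PowerSeries.coeff_zero_eq_constantCoeff, hg0]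
  -- positivity of all coefficients of g
  have hpos : ∀ n : ℕ, 0 < PowerSeries.coeff n g := by
    intro n
    induction n using Nat.strong_induction_on with
    | _ n ih =>
      match n with
      | 0 => rw [hb0]; norm_num
      | (m + 1) =>
        have hk := key_rec f g hgexp m
        have hsum : PowerSeries.coeff 1 f * PowerSeries.coeff m g ≤
            ∑ p ∈ Finset.HasAntidiagonal.antidiagonal m,
              PowerSeries.coeff (p.1 + 1) f * ((p.1 : ℝ) + 1) * PowerSeries.coeff p.2 g := by
          have hmem : (0, m) ∈ Finset.HasAntidiagonal.antidiagonal m := by simp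
          have := Finset.single_le_sum (f := fun p : ℕ × ℕ =>
            PowerSeries.coeff (p.1 + 1) f * ((p.1 : ℝ) + 1) * PowerSeries.coeff p.2 g)
            (fun p hp => by
              have hp2 : p.2 < m + 1 := Nat.lt_succ_of_le (Finset.HasAntidiagonal.antidiagonal.snd_le hp)
              exact mul_nonneg (mul_nonneg (hfnonneg _) (by positivity)) (ih p.2 hp2).le) hmem
          simpa using this
        have : 0 < ((m : ℝ) + 1) * PowerSeries.coeff (m + 1) g := by
          rw [hk]
          calc (0:ℝ) < PowerSeries.coeff 1 f * PowerSeries.coeff m g :=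
                mul_pos hf1 (ih m (Nat.lt_succ_self m))
            _ ≤ _ := hsum
        have hm : (0:ℝ) < (m:ℝ)+1 := by positivity
        nlinarith [this, hm]
  have hineq : ∀ n : ℕ, 1 ≤ n →
      PowerSeries.coeff 1 f * PowerSeries.coeff (n - 1) g ≤
        (n : ℝ) * PowerSeries.coeff n g := by
    intro n hn
    obtain ⟨m, rfl⟩ : ∃ m, n = m + 1 := ⟨n - 1, by omega⟩
    have hk := key_rec f g hgexp m
    simp only [Nat.add_sub_cancel]
    push_cast
    rw [hk]
    have hmem : (0, m) ∈ Finset.HasAntidiagonal.antidiagonal m := by simp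
    have := Finset.single_le_sum (f := fun p : ℕ × ℕ =>
      PowerSeries.coeff (p.1 + 1) f * ((p.1 : ℝ) + 1) * PowerSeries.coeff p.2 g)
      (fun p _ => mul_nonneg (mul_nonneg (hfnonneg _) (by positivity)) (hpos p.2).le) hmem
    simpa using this
  have hb1 : PowerSeries.coeff 1 g = PowerSeries.coeff 1 f := by
    have hk := key_rec f g hgexp 0
    simpa [hb0] using hk
  intro n hn
  refine ⟨hineq n hn, hpos n, div_nonneg (hpos _).le (hpos n).le, ?_, ?_⟩
  · rw [← mul_div_assoc, div_le_div_iff₀ (hpos n) (hpos 1), hb0, hb1, mul_one, mul_comm]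
    exact hineq n hn
  · rw [hb0, hb1]
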